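/- arXiv:math-ph/0608029 — 2 statements merged into one kernel-verified Lean document; each statement's English description precedes it below -/
import Mathlib

section
/- Assume w is exponentially bounded and dom z is not all of R^2. Define T : R -> R by T(t) = - limsup_{|k| -> infinity, k in N^2} (2 log w(k) + t(k_1 - k_2))/(k_1 + k_2), where the limsup over |k| -> infinity means inf over n of the sup over k in N^2 with |k| >= n. Then T is real-valued (finite everywhere), and for every mu = (mu_1, mu_2) in R^2: if mu_1 + mu_2 < T(mu_1 - mu_2) then mu lies in D_mu (in fact in the interior of dom z), while if mu_1 + mu_2 > T(mu_1 - mu_2) then z(mu) = infinity. Consequently the boundary of dom z equals {mu in R^2 : mu_1 + mu_2 = T(mu_1 - mu_2)}. -/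
open Real Set Filter Topology

noncomputable section

/-- Euclidean norm `|k|` of a pair of naturals. -/
def knorm (k : ℕ × ℕ) : ℝ := Real.sqrt ((k.1 : ℝ) ^ 2 + (k.2 : ℝ) ^ 2)

/-- Dot product `μ·k` of a chemical potential with an occupation vector. -/
def dotNat (μ : ℝ × ℝ) (k : ℕ × ℕ) : ℝ := μ.1 * k.1 + μ.2 * k.2

/-- Summand `w(k) exp(μ·k)` of the grand-canonical partition function. -/
def zsummand (w : ℕ × ℕ → ℝ) (μ : ℝ × ℝ) (k : ℕ × ℕ) : ℝ := w k * Real.exp (dotNat μ k)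

/-- `dom z`: the set of `μ` where `z(μ) = ∑_k w(k) exp(μ·k)` is finite. -/
def domz (w : ℕ × ℕ → ℝ) : Set (ℝ × ℝ) := {μ | Summable (zsummand w μ)}

/-- `D_μ`: the set of `μ` where `∑_k k_i w(k) exp(μ·k)` is finite for `i = 1,2`. -/
def Dmu (w : ℕ × ℕ → ℝ) : Set (ℝ × ℝ) :=
  {μ | Summable (fun k : ℕ × ℕ => (k.1 : ℝ) * zsummand w μ k) ∧
       Summable (fun k : ℕ × ℕ => (k.2 : ℝ) * zsummand w μ k)}

/-- `w` is exponentially bounded: `w(k) ≤ ξ^|k|` for some `ξ > 0`. -/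
def ExpBounded (w : ℕ × ℕ → ℝ) : Prop := ∃ ξ : ℝ, 0 < ξ ∧ ∀ k : ℕ × ℕ, w k ≤ ξ ^ knorm k

/-- The term whose `limsup` over `|k| → ∞` describes the boundary of `dom z`
in rotated coordinates. -/
def limsupTerm (w : ℕ × ℕ → ℝ) (t : ℝ) (k : ℕ × ℕ) : ℝ :=
  (2 * Real.log (w k) + t * ((k.1 : ℝ) - (k.2 : ℝ))) / ((k.1 : ℝ) + (k.2 : ℝ))

/-- The `limsup` over `|k| → ∞` (inf over `n` of sup over `|k| ≥ n`), valued in `EReal`. -/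
def limsupE (w : ℕ × ℕ → ℝ) (t : ℝ) : EReal :=
  ⨅ n : ℕ, ⨆ k : {k : ℕ × ℕ // (n : ℝ) ≤ knorm k}, ((limsupTerm w t k.1 : ℝ) : EReal)

lemma knorm_nonneg (k : ℕ × ℕ) : 0 ≤ knorm k := Real.sqrt_nonneg _

lemma fst_le_knorm (k : ℕ × ℕ) : (k.1 : ℝ) ≤ knorm k := by
  rw [knorm]
  calc (k.1 : ℝ) = Real.sqrt ((k.1 : ℝ) ^ 2) := by rw [Real.sqrt_sq (by positivity)]
  _ ≤ _ := Real.sqrt_le_sqrt (le_add_of_nonneg_right (by positivity))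

lemma snd_le_knorm (k : ℕ × ℕ) : (k.2 : ℝ) ≤ knorm k := by
  rw [knorm]
  calc (k.2 : ℝ) = Real.sqrt ((k.2 : ℝ) ^ 2) := by rw [Real.sqrt_sq (by positivity)]
  _ ≤ _ := Real.sqrt_le_sqrt (le_add_of_nonneg_left (by positivity))

lemma knorm_le_add (k : ℕ × ℕ) : knorm k ≤ (k.1 : ℝ) + k.2 := by
  rw [knorm]
  have h : ((k.1 : ℝ)) ^ 2 + (k.2 : ℝ) ^ 2 ≤ ((k.1 : ℝ) + k.2) ^ 2 := by
    nlinarith [mul_nonneg (Nat.cast_nonneg (α := ℝ) k.1) (Nat.cast_nonneg (α := ℝ) k.2)]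
  calc Real.sqrt ((k.1 : ℝ) ^ 2 + (k.2 : ℝ) ^ 2) ≤ Real.sqrt (((k.1 : ℝ) + k.2) ^ 2) :=
        Real.sqrt_le_sqrt h
  _ = (k.1 : ℝ) + k.2 := Real.sqrt_sq (by positivity)

lemma knorm_nat (n : ℕ) : knorm (n, 0) = n := by
  simp [knorm, Real.sqrt_sq (by positivity : (0:ℝ) ≤ (n:ℝ))]

lemma key_id (w : ℕ × ℕ → ℝ) (μ : ℝ × ℝ) (k : ℕ × ℕ) (hk : ((k.1 : ℝ) + k.2) ≠ 0) :
    Real.log (w k) + dotNat μ k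
      = (limsupTerm w (μ.1 - μ.2) k + (μ.1 + μ.2)) * ((k.1 : ℝ) + k.2) / 2 := by
  rw [limsupTerm, dotNat]
  field_simp
  ring

lemma zsummand_eq (w : ℕ × ℕ → ℝ) (μ : ℝ × ℝ) (k : ℕ × ℕ) (hw : 0 < w k) :
    zsummand w μ k = Real.exp (Real.log (w k) + dotNat μ k) := by
  rw [zsummand, Real.exp_add, Real.exp_log hw]

lemma finite_small (m : ℕ) : {k : ℕ × ℕ | knorm k < (m : ℝ)}.Finite := by
  apply Set.Finite.subset ((Set.finite_Iio m).prod (Set.finite_Iio m))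
  intro k hk
  have h1 : (k.1 : ℝ) < m := lt_of_le_of_lt (fst_le_knorm k) hk
  have h2 : (k.2 : ℝ) < m := lt_of_le_of_lt (snd_le_knorm k) hk
  exact Set.mem_prod.mpr ⟨by exact_mod_cast h1, by exact_mod_cast h2⟩

lemma summable_of_tail_le {f g : ℕ × ℕ → ℝ} (hf : ∀ k, 0 ≤ f k) (hg : Summable g)
    (m : ℕ) (h : ∀ k : ℕ × ℕ, (m : ℝ) ≤ knorm k → f k ≤ g k) : Summable f := by
  rw [← (finite_small m).summable_compl_iff]
  exact Summable.of_nonneg_of_le (fun j => hf _) (fun j => h _ (not_lt.mp j.2))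
    (hg.subtype _)

lemma tail_summable (w : ℕ × ℕ → ℝ) (hw : ∀ k, 0 < w k) (μ : ℝ × ℝ) (n : ℕ) (ε : ℝ)
    (hε : 0 < ε)
    (h : ∀ k : ℕ × ℕ, (n : ℝ) ≤ knorm k → (1 : ℝ) ≤ knorm k →
      Real.log (w k) + dotNat μ k ≤ -ε * ((k.1 : ℝ) + k.2)) :
    Summable (zsummand w μ) ∧ Summable (fun k : ℕ × ℕ => (k.1 : ℝ) * zsummand w μ k)
      ∧ Summable (fun k : ℕ × ℕ => (k.2 : ℝ) * zsummand w μ k) := by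
  set r := Real.exp (-ε) with hr
  have hr0 : 0 < r := Real.exp_pos _
  have hr1 : r < 1 := Real.exp_lt_one_iff.mpr (by linarith)
  have hgeo : Summable (fun m : ℕ => r ^ m) := summable_geometric_of_lt_one hr0.le hr1
  have hmono : Summable (fun m : ℕ => (m : ℝ) * r ^ m) := by
    simpa using summable_pow_mul_geometric_of_norm_lt_one 1
      (r := r) (by rwa [Real.norm_eq_abs, abs_of_pos hr0])
  set m : ℕ := max n 1 with hm
  have hz : ∀ k : ℕ × ℕ, (m : ℝ) ≤ knorm k → zsummand w μ k ≤ r ^ k.1 * r ^ k.2 := by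
    intro k hk
    have hn : (n : ℝ) ≤ knorm k :=
      le_trans (by exact_mod_cast Nat.cast_le.mpr (le_max_left n 1)) hk
    have h1 : (1 : ℝ) ≤ knorm k :=
      le_trans (by exact_mod_cast Nat.cast_le.mpr (le_max_right n 1)) hk
    rw [zsummand_eq w μ k (hw k)]
    have hle := h k hn h1
    calc Real.exp (Real.log (w k) + dotNat μ k)
        ≤ Real.exp (-ε * ((k.1 : ℝ) + k.2)) := Real.exp_le_exp.mpr hle
      _ = r ^ k.1 * r ^ k.2 := by
          rw [show -ε * ((k.1 : ℝ) + k.2) = ((k.1 + k.2 : ℕ) : ℝ) * (-ε) by push_cast; ring,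
            Real.exp_nat_mul, ← hr, pow_add]
  have hz0 : ∀ k, 0 ≤ zsummand w μ k := fun k =>
    mul_nonneg (hw k).le (Real.exp_pos _).le
  refine ⟨?_, ?_, ?_⟩
  · exact summable_of_tail_le hz0
      (hgeo.mul_of_nonneg hgeo (fun x => by positivity) (fun x => by positivity)) m hz
  · refine summable_of_tail_le (fun k => mul_nonneg (Nat.cast_nonneg _) (hz0 k))
      (hmono.mul_of_nonneg hgeo (fun x => by positivity) (fun x => by positivity)) m ?_
    intro k hk
    calc (k.1 : ℝ) * zsummand w μ k ≤ (k.1 : ℝ) * (r ^ k.1 * r ^ k.2) :=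
          mul_le_mul_of_nonneg_left (hz k hk) (by positivity)
      _ = ((k.1 : ℝ) * r ^ k.1) * r ^ k.2 := by ring
  · refine summable_of_tail_le (fun k => mul_nonneg (Nat.cast_nonneg _) (hz0 k))
      (hgeo.mul_of_nonneg hmono (fun x => by positivity) (fun x => by positivity)) m ?_
    intro k hk
    calc (k.2 : ℝ) * zsummand w μ k ≤ (k.2 : ℝ) * (r ^ k.1 * r ^ k.2) :=
          mul_le_mul_of_nonneg_left (hz k hk) (by positivity)
      _ = r ^ k.1 * ((k.2 : ℝ) * r ^ k.2) := by ring

lemma tshift (w : ℕ × ℕ → ℝ) (t t' : ℝ) (k : ℕ × ℕ) :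
    limsupTerm w t' k ≤ limsupTerm w t k + |t' - t| := by
  rcases eq_or_ne ((k.1 : ℝ) + k.2) 0 with hq | hq
  · rw [limsupTerm, limsupTerm, hq, div_zero, div_zero]
    positivity
  · have hQ : (0 : ℝ) < (k.1 : ℝ) + k.2 :=
      lt_of_le_of_ne (by positivity) (Ne.symm hq)
    rw [limsupTerm, limsupTerm, div_add' _ _ _ hq, div_le_div_iff_of_pos_right hQ]
    have hd : |(k.1 : ℝ) - k.2| ≤ (k.1 : ℝ) + k.2 := by
      rw [abs_le]
      constructor <;> nlinarith [Nat.cast_nonneg (α := ℝ) k.1, Nat.cast_nonneg (α := ℝ) k.2]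
    nlinarith [abs_nonneg (t' - t), le_abs_self (t' - t), neg_abs_le (t' - t),
      abs_mul (t' - t) ((k.1 : ℝ) - k.2),
      mul_le_mul_of_nonneg_left hd (abs_nonneg (t' - t)),
      le_abs_self ((t' - t) * ((k.1 : ℝ) - k.2))]

/-- If `w` is exponentially bounded and `dom z ≠ ℝ²`, the boundary of
`dom z` is the graph (in rotated variables) of the real-valued function
`T(t) = -limsup_{|k|→∞} (2 log w(k) + t(k₁-k₂))/(k₁+k₂)`: strictly below it one is in
`D_μ` (indeed in the interior of `dom z`), strictly above it `z = ∞`. -/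
theorem statement3 (w : ℕ × ℕ → ℝ) (hw : ∀ k, 0 < w k) (hexp : ExpBounded w)
    (hne : domz w ≠ Set.univ) :
    ∃ T : ℝ → ℝ,
      (∀ t : ℝ, (T t : EReal) = - limsupE w t) ∧
      (∀ μ : ℝ × ℝ, μ.1 + μ.2 < T (μ.1 - μ.2) → μ ∈ Dmu w ∧ μ ∈ interior (domz w)) ∧
      (∀ μ : ℝ × ℝ, T (μ.1 - μ.2) < μ.1 + μ.2 → ¬ Summable (zsummand w μ)) ∧
      frontier (domz w) = {μ : ℝ × ℝ | μ.1 + μ.2 = T (μ.1 - μ.2)} := by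
  classical
  obtain ⟨ξ, hξ, hbound⟩ := hexp
  set S : ℝ → ℕ → EReal := fun t n =>
    ⨆ k : {k : ℕ × ℕ // (n : ℝ) ≤ knorm k}, ((limsupTerm w t k.1 : ℝ) : EReal) with hSdef
  have hL : ∀ t, limsupE w t = ⨅ n, S t n := fun t => rfl
  set M : ℝ := max (Real.log ξ) 0 with hM
  have hM0 : 0 ≤ M := le_max_right _ _
  -- (a) uniform upper bound on the terms
  have hub : ∀ t (k : ℕ × ℕ), limsupTerm w t k ≤ 2 * M + |t| := by
    intro t k
    rcases eq_or_ne ((k.1 : ℝ) + k.2) 0 with hq | hq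
    · rw [limsupTerm, hq, div_zero]; positivity
    · have hQ : (0 : ℝ) < (k.1 : ℝ) + k.2 := lt_of_le_of_ne (by positivity) (Ne.symm hq)
      have hlog : Real.log (w k) ≤ knorm k * Real.log ξ := by
        calc Real.log (w k) ≤ Real.log (ξ ^ knorm k) :=
              Real.log_le_log (hw k) (hbound k)
        _ = knorm k * Real.log ξ := Real.log_rpow hξ _
      have hlog2 : Real.log (w k) ≤ ((k.1 : ℝ) + k.2) * M := by
        rcases le_or_gt 0 (Real.log ξ) with hl | hl
        · calc Real.log (w k) ≤ knorm k * Real.log ξ := hlog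
          _ ≤ ((k.1 : ℝ) + k.2) * M := by
              have := knorm_le_add k
              have := knorm_nonneg k
              have : Real.log ξ ≤ M := le_max_left _ _
              nlinarith [knorm_le_add k, knorm_nonneg k, le_max_left (Real.log ξ) (0:ℝ)]
        · calc Real.log (w k) ≤ knorm k * Real.log ξ := hlog
          _ ≤ 0 := mul_nonpos_of_nonneg_of_nonpos (knorm_nonneg k) hl.le
          _ ≤ ((k.1 : ℝ) + k.2) * M := by positivity
      have htd : t * ((k.1 : ℝ) - k.2) ≤ |t| * ((k.1 : ℝ) + k.2) := by
        have hd : |(k.1 : ℝ) - k.2| ≤ (k.1 : ℝ) + k.2 := by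
          rw [abs_le]
          constructor <;>
            nlinarith [Nat.cast_nonneg (α := ℝ) k.1, Nat.cast_nonneg (α := ℝ) k.2]
        calc t * ((k.1 : ℝ) - k.2) ≤ |t * ((k.1 : ℝ) - k.2)| := le_abs_self _
        _ = |t| * |(k.1 : ℝ) - k.2| := abs_mul _ _
        _ ≤ |t| * ((k.1 : ℝ) + k.2) := mul_le_mul_of_nonneg_left hd (abs_nonneg t)
      rw [limsupTerm, div_le_iff₀ hQ]
      nlinarith [hlog2, htd]
  -- the sups are bounded above
  have hSub : ∀ t n, S t n ≤ ((2 * M + |t| : ℝ) : EReal) := by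
    intro t n
    exact iSup_le fun k => EReal.coe_le_coe_iff.mpr (hub t k.1)
  have hTop : ∀ t, limsupE w t ≠ ⊤ := by
    intro t
    refine ne_top_of_le_ne_top (EReal.coe_ne_top (2 * M + |t|)) ?_
    exact le_trans (iInf_le _ 0) (hSub t 0)
  -- extracting pointwise bounds from a bound on a sup
  have hpt : ∀ t (n : ℕ) (c : ℝ), S t n < (c : EReal) →
      ∀ k : ℕ × ℕ, (n : ℝ) ≤ knorm k → limsupTerm w t k < c := by
    intro t n c hc k hk
    have := lt_of_le_of_lt (le_iSup (fun k : {k : ℕ × ℕ // (n : ℝ) ≤ knorm k} =>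
      ((limsupTerm w t k.1 : ℝ) : EReal)) ⟨k, hk⟩) hc
    exact_mod_cast this
  -- summability driver
  have hsum : ∀ (μ : ℝ × ℝ) (n : ℕ) (c : ℝ), c + (μ.1 + μ.2) < 0 →
      (∀ k : ℕ × ℕ, (n : ℝ) ≤ knorm k → limsupTerm w (μ.1 - μ.2) k ≤ c) →
      Summable (zsummand w μ) ∧ Summable (fun k : ℕ × ℕ => (k.1 : ℝ) * zsummand w μ k)
        ∧ Summable (fun k : ℕ × ℕ => (k.2 : ℝ) * zsummand w μ k) := by
    intro μ n c hc hterm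
    refine tail_summable w hw μ n (-(c + (μ.1 + μ.2)) / 2) (by linarith) ?_
    intro k hk h1
    have hQ : (0 : ℝ) < (k.1 : ℝ) + k.2 := lt_of_lt_of_le (by linarith) (knorm_le_add k)
    rw [key_id w μ k (ne_of_gt hQ)]
    have ht := hterm k hk
    nlinarith [ht, hQ]
  -- divergence driver
  have hdiv : ∀ μ : ℝ × ℝ,
      (∀ n : ℕ, ∃ k : ℕ × ℕ, (n : ℝ) ≤ knorm k ∧
        -(μ.1 + μ.2) < limsupTerm w (μ.1 - μ.2) k) →
      ¬ Summable (zsummand w μ) := by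
    intro μ hbig hsumm
    have h0 := hsumm.tendsto_cofinite_zero
    have hfin : {k : ℕ × ℕ | (1 : ℝ) ≤ zsummand w μ k}.Finite := by
      have hmem : {k : ℕ × ℕ | zsummand w μ k ∈ Set.Ioo (-1 : ℝ) 1} ∈ Filter.cofinite :=
        h0 (Ioo_mem_nhds (by norm_num) (by norm_num))
      refine (Filter.mem_cofinite.mp hmem).subset ?_
      intro k hk hk2
      exact absurd hk2.2 (not_lt.mpr hk)
    obtain ⟨B, hB⟩ := (hfin.image knorm).bddAbove
    obtain ⟨m, hm⟩ := exists_nat_ge B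
    obtain ⟨k, hk1, hk2⟩ := hbig (m + 1)
    have hcast : ((m + 1 : ℕ) : ℝ) = (m : ℝ) + 1 := by push_cast; ring
    have hQ : (0 : ℝ) < (k.1 : ℝ) + k.2 := by
      have := knorm_le_add k
      rw [hcast] at hk1
      linarith
    have hpos : 0 < Real.log (w k) + dotNat μ k := by
      rw [key_id w μ k (ne_of_gt hQ)]
      have : 0 < limsupTerm w (μ.1 - μ.2) k + (μ.1 + μ.2) := by linarith
      positivity
    have hone : (1 : ℝ) ≤ zsummand w μ k := by
      rw [zsummand_eq w μ k (hw k)]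
      calc (1 : ℝ) = Real.exp 0 := Real.exp_zero.symm
      _ ≤ _ := Real.exp_le_exp.mpr hpos.le
    have hkmem : knorm k ∈ knorm '' {k : ℕ × ℕ | (1 : ℝ) ≤ zsummand w μ k} :=
      ⟨k, hone, rfl⟩
    have := hB hkmem
    rw [hcast] at hk1
    linarith
  -- the limsup is never ⊥
  have hBot : ∀ t, limsupE w t ≠ ⊥ := by
    intro t hbot
    apply hne
    rw [Set.eq_univ_iff_forall]
    intro μ
    set t' := μ.1 - μ.2 with ht'
    set s := μ.1 + μ.2 with hs
    set c₀ : ℝ := -(s + 1) - |t' - t| with hc₀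
    have hlt : (⨅ n, S t n) < ((c₀ : ℝ) : EReal) := by
      rw [← hL t, hbot]; exact EReal.bot_lt_coe _
    obtain ⟨n, hn⟩ := iInf_lt_iff.mp hlt
    have hterm : ∀ k : ℕ × ℕ, (n : ℝ) ≤ knorm k → limsupTerm w t' k ≤ -(s + 1) := by
      intro k hk
      have h1 := hpt t n c₀ hn k hk
      have h2 := tshift w t t' k
      rw [hc₀] at h1
      linarith
    exact (hsum μ n (-(s + 1)) (by linarith) hterm).1
  -- the real-valued function
  set ℓ : ℝ → ℝ := fun t => (limsupE w t).toReal with hℓ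
  have hcoe : ∀ t, ((ℓ t : ℝ) : EReal) = limsupE w t := fun t =>
    EReal.coe_toReal (hTop t) (hBot t)
  set T : ℝ → ℝ := fun t => -ℓ t with hT
  have hTcoe : ∀ t : ℝ, (T t : EReal) = - limsupE w t := by
    intro t
    rw [hT]
    push_cast
    rw [hcoe t]
  -- below the graph: summability
  have hbelow : ∀ μ : ℝ × ℝ, μ.1 + μ.2 < T (μ.1 - μ.2) →
      Summable (zsummand w μ) ∧ Summable (fun k : ℕ × ℕ => (k.1 : ℝ) * zsummand w μ k)
        ∧ Summable (fun k : ℕ × ℕ => (k.2 : ℝ) * zsummand w μ k) := by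
    intro μ hμ
    set t := μ.1 - μ.2 with ht
    set s := μ.1 + μ.2 with hs
    have hslt : s < -ℓ t := hμ
    set c : ℝ := (ℓ t + -s) / 2 with hc
    have h1 : ℓ t < c := by rw [hc]; linarith
    have h2 : c + s < 0 := by rw [hc]; linarith
    have hlt : (⨅ n, S t n) < ((c : ℝ) : EReal) := by
      rw [← hL t, ← hcoe t]
      exact_mod_cast h1
    obtain ⟨n, hn⟩ := iInf_lt_iff.mp hlt
    exact hsum μ n c h2 fun k hk => (hpt t n c hn k hk).le
  -- above the graph: divergence
  have habove : ∀ μ : ℝ × ℝ, T (μ.1 - μ.2) < μ.1 + μ.2 → ¬ Summable (zsummand w μ) := by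
    intro μ hμ
    set t := μ.1 - μ.2 with ht
    set s := μ.1 + μ.2 with hs
    have hslt : -s < ℓ t := by
      have : -ℓ t < s := hμ
      linarith
    refine hdiv μ ?_
    intro n
    have hlow : ((-s : ℝ) : EReal) < S t n := by
      calc ((-s : ℝ) : EReal) < ((ℓ t : ℝ) : EReal) := by exact_mod_cast hslt
      _ = limsupE w t := hcoe t
      _ ≤ S t n := by rw [hL t]; exact iInf_le _ n
    obtain ⟨k, hk⟩ := lt_iSup_iff.mp hlow
    exact ⟨k.1, k.2, by exact_mod_cast hk⟩
  -- Lipschitz bound on ℓ, hence continuity of T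
  have hlip : ∀ t t' : ℝ, ℓ t' ≤ ℓ t + |t' - t| := by
    intro t t'
    by_contra hcon
    push_neg at hcon
    set ε : ℝ := (ℓ t' - ℓ t - |t' - t|) / 2 with hε
    have hε0 : 0 < ε := by rw [hε]; linarith
    have h1 : (⨅ n, S t n) < ((ℓ t + ε : ℝ) : EReal) := by
      rw [← hL t, ← hcoe t]
      exact_mod_cast (by linarith : ℓ t < ℓ t + ε)
    obtain ⟨n, hn⟩ := iInf_lt_iff.mp h1
    have h2 : S t' n ≤ ((ℓ t + ε + |t' - t| : ℝ) : EReal) := by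
      refine iSup_le fun k => ?_
      have h3 := hpt t n (ℓ t + ε) hn k.1 k.2
      have h4 := tshift w t t' k.1
      exact EReal.coe_le_coe_iff.mpr (by linarith)
    have h5 : ((ℓ t' : ℝ) : EReal) ≤ ((ℓ t + ε + |t' - t| : ℝ) : EReal) := by
      calc ((ℓ t' : ℝ) : EReal) = limsupE w t' := hcoe t'
      _ ≤ S t' n := by rw [hL t']; exact iInf_le _ n
      _ ≤ _ := h2
    have h6 : ℓ t' ≤ ℓ t + ε + |t' - t| := by exact_mod_cast h5
    rw [hε] at h6
    linarith
  have hTcont : Continuous T := by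
    have : LipschitzWith 1 ℓ := by
      refine LipschitzWith.of_dist_le_mul fun t t' => ?_
      rw [Real.dist_eq, Real.dist_eq, NNReal.coe_one, one_mul, abs_le]
      constructor
      · have := hlip t t'
        rw [abs_sub_comm] at this
        linarith
      · have := hlip t' t
        linarith
    exact (this.continuous).neg
  have hgcont : Continuous fun μ : ℝ × ℝ => T (μ.1 - μ.2) - (μ.1 + μ.2) :=
    (hTcont.comp (continuous_fst.sub continuous_snd)).sub
      (continuous_fst.add continuous_snd)
  set U : Set (ℝ × ℝ) := {μ | μ.1 + μ.2 < T (μ.1 - μ.2)} with hU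
  set V : Set (ℝ × ℝ) := {μ | T (μ.1 - μ.2) < μ.1 + μ.2} with hV
  have hUopen : IsOpen U := by
    have : U = (fun μ : ℝ × ℝ => T (μ.1 - μ.2) - (μ.1 + μ.2)) ⁻¹' Set.Ioi 0 := by
      ext μ
      simp only [hU, Set.mem_setOf_eq, Set.mem_preimage, Set.mem_Ioi]
      constructor <;> intro <;> linarith
    rw [this]
    exact isOpen_Ioi.preimage hgcont
  have hVopen : IsOpen V := by
    have : V = (fun μ : ℝ × ℝ => T (μ.1 - μ.2) - (μ.1 + μ.2)) ⁻¹' Set.Iio 0 := by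
      ext μ
      simp only [hV, Set.mem_setOf_eq, Set.mem_preimage, Set.mem_Iio]
      constructor <;> intro <;> linarith
    rw [this]
    exact isOpen_Iio.preimage hgcont
  have hUsub : U ⊆ domz w := fun μ hμ => (hbelow μ hμ).1
  have hVsub : V ⊆ (domz w)ᶜ := fun μ hμ => habove μ hμ
  have hUint : U ⊆ interior (domz w) := interior_maximal hUsub hUopen
  have hVint : V ⊆ (closure (domz w))ᶜ := by
    rw [← interior_compl]
    exact interior_maximal hVsub hVopen
  refine ⟨T, hTcoe, ?_, habove, ?_⟩
  · intro μ hμ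
    obtain ⟨h1, h2, h3⟩ := hbelow μ hμ
    exact ⟨⟨h2, h3⟩, hUint hμ⟩
  · ext μ
    simp only [Set.mem_setOf_eq]
    constructor
    · intro hμ
      rcases lt_trichotomy (μ.1 + μ.2) (T (μ.1 - μ.2)) with h | h | h
      · exact absurd (hUint h) hμ.2
      · exact h
      · exact absurd hμ.1 (fun hc => (hVint h) hc)
    · intro heq
      rw [frontier_eq_closure_inter_closure]
      constructor
      · -- in closure of domz: approach from below
        set f : ℕ → ℝ × ℝ := fun m => (μ.1 - 1 / (m + 1), μ.2 - 1 / (m + 1)) with hf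
        have htend : Tendsto f atTop (𝓝 μ) := by
          have h1 : Tendsto (fun m : ℕ => μ.1 - 1 / ((m : ℝ) + 1)) atTop (𝓝 μ.1) := by
            simpa using (tendsto_const_nhds : Tendsto (fun _ : ℕ => μ.1) atTop (𝓝 μ.1)).sub tendsto_one_div_add_atTop_nhds_zero_nat
          have h2 : Tendsto (fun m : ℕ => μ.2 - 1 / ((m : ℝ) + 1)) atTop (𝓝 μ.2) := by
            simpa using (tendsto_const_nhds : Tendsto (fun _ : ℕ => μ.2) atTop (𝓝 μ.2)).sub tendsto_one_div_add_atTop_nhds_zero_nat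
          exact (h1.prodMk_nhds h2).congr (fun m => by rw [hf])
        refine mem_closure_of_tendsto htend (Filter.Eventually.of_forall fun m => ?_)
        apply hUsub
        show (f m).1 + (f m).2 < T ((f m).1 - (f m).2)
        have hpos : (0 : ℝ) < 1 / ((m : ℝ) + 1) := by positivity
        have he1 : (f m).1 - (f m).2 = μ.1 - μ.2 := by rw [hf]; ring
        have he2 : (f m).1 + (f m).2 = μ.1 + μ.2 - 2 * (1 / ((m : ℝ) + 1)) := by
          rw [hf]; ring
        rw [he1, he2, ← heq]
        linarith
      · -- in closure of complement: approach from above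
        set f : ℕ → ℝ × ℝ := fun m => (μ.1 + 1 / (m + 1), μ.2 + 1 / (m + 1)) with hf
        have htend : Tendsto f atTop (𝓝 μ) := by
          have h1 : Tendsto (fun m : ℕ => μ.1 + 1 / ((m : ℝ) + 1)) atTop (𝓝 μ.1) := by
            simpa using (tendsto_const_nhds : Tendsto (fun _ : ℕ => μ.1) atTop (𝓝 μ.1)).add tendsto_one_div_add_atTop_nhds_zero_nat
          have h2 : Tendsto (fun m : ℕ => μ.2 + 1 / ((m : ℝ) + 1)) atTop (𝓝 μ.2) := by
            simpa using (tendsto_const_nhds : Tendsto (fun _ : ℕ => μ.2) atTop (𝓝 μ.2)).add tendsto_one_div_add_atTop_nhds_zero_nat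
          exact (h1.prodMk_nhds h2).congr (fun m => by rw [hf])
        refine mem_closure_of_tendsto htend (Filter.Eventually.of_forall fun m => ?_)
        apply hVsub
        show T ((f m).1 - (f m).2) < (f m).1 + (f m).2
        have hpos : (0 : ℝ) < 1 / ((m : ℝ) + 1) := by positivity
        have he1 : (f m).1 - (f m).2 = μ.1 - μ.2 := by rw [hf]; ring
        have he2 : (f m).1 + (f m).2 = μ.1 + μ.2 + 2 * (1 / ((m : ℝ) + 1)) := by
          rw [hf]; ring
        rw [he1, he2, ← heq]
        linarith
end
end

section
/- Suppose (a, mu_2) lies in D_mu for some a in R. Then the following limits as mu_1 -> -infinity exist: z(mu_1, mu_2) converges to sum over k_2 in N of w(0,k_2) exp(mu_2 k_2), which is finite and positive; R_1(mu_1, mu_2) converges to 0; and R_2(mu_1, mu_2) converges to (sum over k_2 in N of k_2 w(0,k_2) exp(mu_2 k_2)) / (sum over k_2 in N of w(0,k_2) exp(mu_2 k_2)). -/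
open Real Set Filter Topology

noncomputable section

/-- The grand-canonical partition function `z(μ)`. -/
def zfun (w : ℕ × ℕ → ℝ) (μ : ℝ × ℝ) : ℝ := ∑' k : ℕ × ℕ, zsummand w μ k

/-- The pressure `p(μ) = log z(μ)`. -/
def press (w : ℕ × ℕ → ℝ) (μ : ℝ × ℝ) : ℝ := Real.log (zfun w μ)

/-- The single-site grand-canonical mass function `ν¹_μ(k) = w(k) exp(μ·k)/z(μ)`. -/
def nu1 (w : ℕ × ℕ → ℝ) (μ : ℝ × ℝ) (k : ℕ × ℕ) : ℝ := zsummand w μ k / zfun w μ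

/-- Density of the first species `R₁(μ)`. -/
def R1 (w : ℕ × ℕ → ℝ) (μ : ℝ × ℝ) : ℝ := ∑' k : ℕ × ℕ, (k.1 : ℝ) * nu1 w μ k

/-- Density of the second species `R₂(μ)`. -/
def R2 (w : ℕ × ℕ → ℝ) (μ : ℝ × ℝ) : ℝ := ∑' k : ℕ × ℕ, (k.2 : ℝ) * nu1 w μ k

/-- The density map `R(μ) = (R₁(μ), R₂(μ))`. -/
def Rmap (w : ℕ × ℕ → ℝ) (μ : ℝ × ℝ) : ℝ × ℝ := (R1 w μ, R2 w μ)

/-- Dot product of two real vectors. -/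
def dotR (a b : ℝ × ℝ) : ℝ := a.1 * b.1 + a.2 * b.2

/-- If `(a, μ₂) ∈ D_μ` for some `a`, then as `μ₁ → -∞`: `z(μ₁,μ₂)`
converges to `∑_{k₂} w(0,k₂) e^{μ₂ k₂}` (a finite positive number), `R₁(μ₁,μ₂) → 0`, and
`R₂(μ₁,μ₂)` converges to the corresponding single-line mean. -/
theorem statement7 (w : ℕ × ℕ → ℝ) (hw : ∀ k, 0 < w k) (a μ2 : ℝ)
    (h : (a, μ2) ∈ Dmu w) :
    Summable (fun j : ℕ => w (0, j) * Real.exp (μ2 * j)) ∧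
    0 < ∑' j : ℕ, w (0, j) * Real.exp (μ2 * j) ∧
    Tendsto (fun t : ℝ => zfun w (t, μ2)) atBot (𝓝 (∑' j : ℕ, w (0, j) * Real.exp (μ2 * j))) ∧
    Tendsto (fun t : ℝ => R1 w (t, μ2)) atBot (𝓝 0) ∧
    Tendsto (fun t : ℝ => R2 w (t, μ2)) atBot
      (𝓝 ((∑' j : ℕ, (j : ℝ) * w (0, j) * Real.exp (μ2 * j)) /
           (∑' j : ℕ, w (0, j) * Real.exp (μ2 * j)))) := by
  obtain ⟨h1, h2⟩ := h
  set μ : ℝ × ℝ := (a, μ2) with hμ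
  have hz_nonneg : ∀ (ν : ℝ × ℝ) (k : ℕ × ℕ), 0 ≤ zsummand w ν k :=
    fun ν k => le_of_lt (mul_pos (hw k) (Real.exp_pos _))
  -- summability of the dominating functions
  have he : Function.Injective (fun j : ℕ => ((0, j) : ℕ × ℕ)) := by
    intro i j hij; simpa using hij
  have hsum0 : Summable (fun k : ℕ × ℕ => if k = (0, 0) then zsummand w μ (0, 0) else 0) := by
    apply summable_of_ne_finset_zero (s := {((0, 0) : ℕ × ℕ)})
    intro b hb
    simp only [Finset.mem_singleton] at hb
    exact if_neg hb
  have hzμ : Summable (zsummand w μ) := by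
    apply Summable.of_nonneg_of_le (hz_nonneg μ) _ ((h1.add h2).add hsum0)
    rintro ⟨k1, k2⟩
    by_cases hk : (k1, k2) = ((0, 0) : ℕ × ℕ)
    · rw [hk]; simp
    · have hge : 1 ≤ k1 + k2 := by
        rcases Nat.eq_zero_or_pos (k1 + k2) with h0 | h0
        · exfalso; apply hk; have := Nat.add_eq_zero.mp h0; simp [this.1, this.2]
        · omega
      have hge' : (1 : ℝ) ≤ (k1 : ℝ) + (k2 : ℝ) := by exact_mod_cast hge
      have hnn := hz_nonneg μ (k1, k2)
      simp only [hk, if_false]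
      nlinarith
  -- pointwise limit function
  set g : ℕ × ℕ → ℝ := fun k => if k.1 = 0 then w k * Real.exp (μ2 * k.2) else 0 with hg
  have hg_tendsto : ∀ k : ℕ × ℕ,
      Tendsto (fun t : ℝ => zsummand w (t, μ2) k) atBot (𝓝 (g k)) := by
    rintro ⟨k1, k2⟩
    by_cases hk1 : k1 = 0
    · subst hk1
      simp only [hg, zsummand, dotNat]
      norm_num
    · have hpos : (0 : ℝ) < (k1 : ℝ) := by exact_mod_cast Nat.pos_of_ne_zero hk1
      have hmul : Tendsto (fun t : ℝ => t * (k1 : ℝ)) atBot atBot :=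
        Tendsto.atBot_mul_const hpos tendsto_id
      have hexp : Tendsto (fun t : ℝ => Real.exp (t * (k1 : ℝ))) atBot (𝓝 0) :=
        Real.tendsto_exp_atBot.comp hmul
      have : Tendsto (fun t : ℝ => w (k1, k2) * (Real.exp (t * (k1 : ℝ)) * Real.exp (μ2 * k2)))
          atBot (𝓝 (w (k1, k2) * (0 * Real.exp (μ2 * k2)))) :=
        ((hexp.mul_const _).const_mul _)
      simp only [zero_mul, mul_zero] at this
      have heq : (fun t : ℝ => zsummand w (t, μ2) (k1, k2)) =
          fun t : ℝ => w (k1, k2) * (Real.exp (t * (k1 : ℝ)) * Real.exp (μ2 * k2)) := by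
        funext t
        simp [zsummand, dotNat, ← Real.exp_add]
      rw [heq, hg]
      simpa [hk1] using this
  -- the eventual bound
  have hbd : ∀ᶠ t : ℝ in atBot, ∀ k : ℕ × ℕ, ‖zsummand w (t, μ2) k‖ ≤ zsummand w μ k := by
    filter_upwards [eventually_le_atBot a] with t ht k
    rw [Real.norm_of_nonneg (hz_nonneg _ k)]
    apply mul_le_mul_of_nonneg_left _ (hw k).le
    apply Real.exp_le_exp.mpr
    simp only [dotNat, hμ]
    have : t * (k.1 : ℝ) ≤ a * (k.1 : ℝ) :=
      mul_le_mul_of_nonneg_right ht (Nat.cast_nonneg _)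
    linarith
  -- support of g and related functions
  have hsupp : ∀ (c : ℕ × ℕ → ℝ), (Function.support fun k => c k * g k) ⊆
      Set.range (fun j : ℕ => ((0, j) : ℕ × ℕ)) := by
    intro c k hk
    rcases k with ⟨k1, k2⟩
    by_cases hk1 : k1 = 0
    · exact ⟨k2, by simp [hk1]⟩
    · exfalso; apply hk; simp [hg, hk1]
  have hsuppg : (Function.support g) ⊆ Set.range (fun j : ℕ => ((0, j) : ℕ × ℕ)) := by
    have := hsupp (fun _ => (1 : ℝ))
    simpa using this
  -- identify the limit tsums
  have htg : ∑' k : ℕ × ℕ, g k = ∑' j : ℕ, w (0, j) * Real.exp (μ2 * j) := by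
    rw [← he.tsum_eq hsuppg]
    simp [hg]
  have htg2 : ∑' k : ℕ × ℕ, (k.2 : ℝ) * g k
      = ∑' j : ℕ, (j : ℝ) * w (0, j) * Real.exp (μ2 * j) := by
    rw [← he.tsum_eq (hsupp (fun k : ℕ × ℕ => (k.2 : ℝ)))]
    simp [hg, mul_assoc]
  have htg1 : ∑' k : ℕ × ℕ, (k.1 : ℝ) * g k = 0 := by
    have : ∀ k : ℕ × ℕ, (k.1 : ℝ) * g k = 0 := by
      rintro ⟨k1, k2⟩
      by_cases hk1 : k1 = 0
      · simp [hk1]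
      · simp [hg, hk1]
    simp [this]
  -- summability of the one-dimensional sums
  have hSj : Summable (fun j : ℕ => w (0, j) * Real.exp (μ2 * j)) := by
    have := hzμ.comp_injective he
    have heq : (zsummand w μ ∘ fun j : ℕ => ((0, j) : ℕ × ℕ))
        = fun j : ℕ => w (0, j) * Real.exp (μ2 * j) := by
      funext j; simp [zsummand, dotNat, hμ]
    rwa [heq] at this
  have hLpos : 0 < ∑' j : ℕ, w (0, j) * Real.exp (μ2 * j) := by
    apply Summable.tsum_pos hSj (fun j => le_of_lt (mul_pos (hw _) (Real.exp_pos _))) 0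
    exact mul_pos (hw _) (Real.exp_pos _)
  -- convergence of Z
  have hZ : Tendsto (fun t : ℝ => zfun w (t, μ2)) atBot
      (𝓝 (∑' j : ℕ, w (0, j) * Real.exp (μ2 * j))) := by
    rw [← htg]
    exact tendsto_tsum_of_dominated_convergence hzμ hg_tendsto hbd
  -- convergence of numerators
  have hN1 : Tendsto (fun t : ℝ => ∑' k : ℕ × ℕ, (k.1 : ℝ) * zsummand w (t, μ2) k) atBot
      (𝓝 0) := by
    rw [← htg1]
    apply tendsto_tsum_of_dominated_convergence h1
      (fun k => (hg_tendsto k).const_mul _)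
    filter_upwards [hbd] with t ht k
    rw [norm_mul, Real.norm_natCast]
    exact mul_le_mul_of_nonneg_left (ht k) (Nat.cast_nonneg _)
  have hN2 : Tendsto (fun t : ℝ => ∑' k : ℕ × ℕ, (k.2 : ℝ) * zsummand w (t, μ2) k) atBot
      (𝓝 (∑' j : ℕ, (j : ℝ) * w (0, j) * Real.exp (μ2 * j))) := by
    rw [← htg2]
    apply tendsto_tsum_of_dominated_convergence h2
      (fun k => (hg_tendsto k).const_mul _)
    filter_upwards [hbd] with t ht k
    rw [norm_mul, Real.norm_natCast]
    exact mul_le_mul_of_nonneg_left (ht k) (Nat.cast_nonneg _)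
  have hLne : (∑' j : ℕ, w (0, j) * Real.exp (μ2 * j)) ≠ 0 := ne_of_gt hLpos
  -- rewrite R1, R2 as quotients
  have hR1eq : ∀ t : ℝ, R1 w (t, μ2)
      = (∑' k : ℕ × ℕ, (k.1 : ℝ) * zsummand w (t, μ2) k) / zfun w (t, μ2) := by
    intro t
    rw [R1, ← tsum_div_const]
    congr 1; funext k; rw [nu1, mul_div_assoc]
  have hR2eq : ∀ t : ℝ, R2 w (t, μ2)
      = (∑' k : ℕ × ℕ, (k.2 : ℝ) * zsummand w (t, μ2) k) / zfun w (t, μ2) := by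
    intro t
    rw [R2, ← tsum_div_const]
    congr 1; funext k; rw [nu1, mul_div_assoc]
  refine ⟨hSj, hLpos, hZ, ?_, ?_⟩
  · have := hN1.div hZ hLne
    simp only [zero_div] at this
    simpa [hR1eq, Pi.div_def] using this
  · have := hN2.div hZ hLne
    simpa [hR2eq, Pi.div_def] using this
end
end
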